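/- arXiv:1905.04719 — 7 statements merged into one kernel-verified Lean document; each statement's English description precedes it below -/
import Mathlib

section
/- Assume every vector in the finite set 𝒱 of rate vectors has at least one strictly positive coordinate, and let x : 𝒱 → ℝ be MP-feasible. For a rate vector v, let minpos(v) denote the least flow index f with v f > 0. Enumerate 𝒱 as v₁, …, vₙ in any order that is nondecreasing in minpos (i.e., minpos(vₖ) < minpos(vₗ) implies k < l). Then the schedule (v₁, x v₁), …, (vₙ, x vₙ) is feasible: for every flow f, Σ_{k=1}^n vₖ f · (x vₖ) = s f, and every segment k with vₖ f > 0 satisfies Σ_{j=1}^{k} x vⱼ ≤ t f. -/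
open scoped Classical BigOperators

/-- A list of segments is a schedule if every rate vector is componentwise
nonnegative and every duration is nonnegative. -/
def IsSchedule {F : ℕ} (L : List ((Fin F → ℝ) × ℝ)) : Prop :=
  ∀ seg ∈ L, (∀ f, 0 ≤ seg.1 f) ∧ 0 ≤ seg.2

/-- A schedule is feasible if for every flow `f`, the total amount delivered equals `s f`
and every segment in which flow `f` has positive rate finishes by the deadline `t f`. -/
def FeasibleSchedule {F : ℕ} (s t : Fin F → ℝ) (L : List ((Fin F → ℝ) × ℝ)) : Prop :=
  IsSchedule L ∧
  ∀ f : Fin F,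
    ((L.map fun seg => seg.1 f * seg.2).sum = s f) ∧
    ∀ k : Fin L.length, 0 < (L.get k).1 f →
      ((L.take ((k : ℕ) + 1)).map Prod.snd).sum ≤ t f

/-- `x` is a feasible solution of the master problem (MP) over the finite set `𝒱` of
rate vectors: it is nonnegative, satisfies the demand constraints
`∑_{v ∈ 𝒱_f} v f * x v = s f`, and the deadline constraints
`∑_{v ∈ 𝒱_0 ∪ ⋯ ∪ 𝒱_f} x v ≤ t f`. -/
def MPFeasible {F : ℕ} (s t : Fin F → ℝ) (𝒱 : Finset (Fin F → ℝ))
    (x : (Fin F → ℝ) → ℝ) : Prop :=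
  (∀ v ∈ 𝒱, 0 ≤ x v) ∧
  (∀ f : Fin F, ∑ v ∈ 𝒱.filter (fun v => 0 < v f), v f * x v = s f) ∧
  (∀ f : Fin F, ∑ v ∈ 𝒱.filter (fun v => ∃ i ≤ f, 0 < v i), x v ≤ t f)

/-- Scheduling the rate vectors of an MP-feasible solution, with their
respective durations, in any order nondecreasing in the least positive flow index,
yields a feasible schedule. -/
theorem mp_solution_yields_feasible_schedule {F : ℕ} (hF : 1 ≤ F)
    (s t : Fin F → ℝ) (hs : ∀ f, 0 < s f) (ht : ∀ f, 0 < t f)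
    (hmono : Monotone t)
    (𝒱 : Finset (Fin F → ℝ)) (hnn : ∀ v ∈ 𝒱, ∀ f, 0 ≤ v f)
    (x : (Fin F → ℝ) → ℝ) (hx : MPFeasible s t 𝒱 x)
    -- `minpos v` is the least flow index with a strictly positive rate in `v`;
    -- in particular every `v ∈ 𝒱` has at least one strictly positive coordinate.
    (minpos : (Fin F → ℝ) → Fin F)
    (hminpos : ∀ v ∈ 𝒱, 0 < v (minpos v) ∧ ∀ i, 0 < v i → minpos v ≤ i)
    -- `L` enumerates `𝒱` in an order nondecreasing in `minpos`.
    (L : List (Fin F → ℝ)) (hnodup : L.Nodup) (hmem : ∀ v, v ∈ L ↔ v ∈ 𝒱)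
    (hsorted : ∀ k l : Fin L.length,
      minpos (L.get k) < minpos (L.get l) → (k : ℕ) < (l : ℕ)) :
    FeasibleSchedule s t (L.map fun v => (v, x v)) := by

  obtain ⟨hxnn, hdem, hdl⟩ := hx
  have hV : L.toFinset = 𝒱 := by
    ext v; simp [hmem]
  constructor
  · intro seg hseg
    simp only [List.mem_map] at hseg
    obtain ⟨v, hv, rfl⟩ := hseg
    exact ⟨hnn v ((hmem v).1 hv), hxnn v ((hmem v).1 hv)⟩
  · intro f
    constructor
    · rw [List.map_map]
      have h1 : (L.map fun v => v f * x v).sum = ∑ v ∈ 𝒱, v f * x v := by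
        rw [← hV, List.sum_toFinset _ hnodup]
      have h2 : ∑ v ∈ 𝒱.filter (fun v => 0 < v f), v f * x v
          = ∑ v ∈ 𝒱, v f * x v := by
        apply Finset.sum_filter_of_ne
        intro v hv hne
        rcases lt_or_eq_of_le (hnn v hv f) with h | h
        · exact h
        · exact absurd (by rw [← h]; ring) hne
      exact h1.trans (h2.symm.trans (hdem f))
    · intro k hk
      have hklen : (k : ℕ) < L.length := by
        simpa using k.isLt
      have hget : ((L.map fun v => (v, x v)).get k) = (L.get ⟨k, hklen⟩, x (L.get ⟨k, hklen⟩)) := by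
        simp [List.get_eq_getElem]
      rw [hget] at hk
      have hposk : 0 < (L.get ⟨k, hklen⟩) f := hk
      have hmemk : L.get ⟨k, hklen⟩ ∈ 𝒱 := (hmem _).1 (L.get_mem _)
      have hminf : minpos (L.get ⟨k, hklen⟩) ≤ f := (hminpos _ hmemk).2 f hposk
      have hTsum : (((L.map fun v => (v, x v)).take ((k : ℕ) + 1)).map Prod.snd).sum
          = ((L.take ((k : ℕ) + 1)).map x).sum := by
        rw [← List.map_take, List.map_map]
        rfl
      rw [hTsum]
      set T := L.take ((k : ℕ) + 1) with hT
      have hTsub : T.Sublist L := List.take_sublist _ _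
      have hTnodup : T.Nodup := hTsub.nodup hnodup
      have hTmem : ∀ v ∈ T, v ∈ 𝒱.filter (fun v => ∃ i ≤ f, 0 < v i) := by
        intro v hv
        obtain ⟨j, hj, rfl⟩ := List.getElem_of_mem hv
        have hjlen : j < L.length := lt_of_lt_of_le hj (by simp [hT, List.length_take])
        have hjk : j ≤ (k : ℕ) := by
          have := hj
          simp [hT, List.length_take] at this
          omega
        have hTj : T[j] = L[j] := by
          simp [hT]
        rw [hTj]
        have hjmem : L[j] ∈ 𝒱 := (hmem _).1 (List.getElem_mem _)
        have hmple : minpos (L[j]) ≤ minpos (L.get ⟨k, hklen⟩) := by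
          by_contra hlt
          push_neg at hlt
          have := hsorted ⟨k, hklen⟩ ⟨j, hjlen⟩ (by simpa using hlt)
          simp at this
          omega
        refine Finset.mem_filter.2 ⟨hjmem, ⟨minpos (L[j]), le_trans hmple hminf, (hminpos _ hjmem).1⟩⟩
      have h1 : (T.map x).sum = ∑ v ∈ T.toFinset, x v := by
        rw [List.sum_toFinset _ hTnodup]
      rw [h1]
      have h2 : ∑ v ∈ T.toFinset, x v ≤ ∑ v ∈ 𝒱.filter (fun v => ∃ i ≤ f, 0 < v i), x v := by
        apply Finset.sum_le_sum_of_subset_of_nonneg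
        · intro v hv
          exact hTmem v (List.mem_toFinset.1 hv)
        · intro v hv _
          exact hxnn v (Finset.mem_filter.1 hv).1
      exact le_trans h2 (hdl f)
end

section
/- Let 𝒱 be a finite nonempty set of rate vectors, each having at least one strictly positive coordinate. There exists a feasible schedule all of whose segments use rate vectors belonging to 𝒱 if and only if there exists an MP-feasible x : 𝒱 → ℝ. Moreover, when they exist, the minimum makespan over all feasible schedules using vectors from 𝒱 equals the minimum of Σ_{v ∈ 𝒱} x v over all MP-feasible x. -/
open scoped Classical BigOperators

/-- Grouping a schedule's durations by rate vector. -/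
lemma group_sum {F : ℕ} (S : Finset (Fin F → ℝ)) (g : (Fin F → ℝ) → ℝ) :
    ∀ L : List ((Fin F → ℝ) × ℝ),
    ∑ v ∈ S, g v * ((L.filter (fun seg => seg.1 = v)).map Prod.snd).sum
      = ((L.filter (fun seg => seg.1 ∈ S)).map (fun seg => g seg.1 * seg.2)).sum
  | [] => by simp
  | a :: L => by
    have ih := group_sum S g L
    have hterm : ∀ v ∈ S, g v * (((a :: L).filter (fun seg => seg.1 = v)).map Prod.snd).sum
        = g v * ((L.filter (fun seg => seg.1 = v)).map Prod.snd).sum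
          + (if a.1 = v then g v * a.2 else 0) := by
      intro v hv
      by_cases hav : a.1 = v
      · simp [List.filter_cons, hav]; ring
      · simp [List.filter_cons, hav]
    rw [Finset.sum_congr rfl hterm, Finset.sum_add_distrib, ih, Finset.sum_ite_eq]
    by_cases h : a.1 ∈ S
    · simp [List.filter_cons, h]; ring
    · simp [List.filter_cons, h]

/-- If every non-`p` term is zero, filtering by `p` does not change the sum. -/
lemma filter_map_sum_eq {α : Type*} (p : α → Bool) (h : α → ℝ) :
    ∀ L : List α, (∀ a ∈ L, ¬ p a → h a = 0) →
    ((L.filter p).map h).sum = (L.map h).sum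
  | [], _ => rfl
  | a :: L, hz => by
    have ih := filter_map_sum_eq p h L (fun b hb => hz b (List.mem_cons_of_mem a hb))
    by_cases hpa : p a
    · simp [List.filter_cons, hpa, ih]
    · simp [List.filter_cons, hpa, ih, hz a List.mem_cons_self hpa]

/-- A prefix-sum deadline bound transfers to the sum over the filtered sublist. -/
lemma prefix_filter_sum {α : Type*} (p : (α × ℝ) → Bool) (C : ℝ) :
    ∀ L : List (α × ℝ), (∀ seg ∈ L, 0 ≤ seg.2) →
    (∀ k : Fin L.length, p (L.get k) → ((L.take ((k : ℕ) + 1)).map Prod.snd).sum ≤ C) →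
    ((L.filter p).map Prod.snd).sum ≤ C ∨ (L.filter p) = []
  | [], _, _ => Or.inr rfl
  | a :: L, hnn, hpre => by
    have hL : ∀ seg ∈ L, 0 ≤ seg.2 := fun seg h => hnn seg (List.mem_cons_of_mem a h)
    have ha2 : 0 ≤ a.2 := hnn a List.mem_cons_self
    have hpre' : ∀ k : Fin L.length, p (L.get k) →
        ((L.take ((k : ℕ) + 1)).map Prod.snd).sum ≤ C - a.2 := by
      intro k hk
      have h1 := hpre ⟨(k : ℕ) + 1, Nat.succ_lt_succ k.isLt⟩ (by simpa using hk)
      simp only [List.take_succ_cons, List.map_cons, List.sum_cons] at h1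
      linarith
    have ih := prefix_filter_sum p (C - a.2) L hL hpre'
    by_cases hpa : p a
    · have h0 : a.2 ≤ C := by
        have := hpre ⟨0, Nat.succ_pos _⟩ (by simpa using hpa)
        simpa using this
      rcases ih with h | h
      · left; simp only [List.filter_cons, hpa]; simp; linarith
      · left; simp only [List.filter_cons, hpa, h]; simp; linarith
    · rcases ih with h | h
      · left; simp only [List.filter_cons, hpa]; simp; linarith
      · right; simp only [List.filter_cons, hpa]; simpa using h

lemma sched_to_mp {F : ℕ} (s t : Fin F → ℝ) (ht : ∀ f, 0 < t f) (hmono : Monotone t)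
    (𝒱 : Finset (Fin F → ℝ)) (hnn : ∀ v ∈ 𝒱, ∀ f, 0 ≤ v f)
    (L : List ((Fin F → ℝ) × ℝ)) (hL : FeasibleSchedule s t L)
    (hmem : ∀ seg ∈ L, seg.1 ∈ 𝒱) :
    ∃ x, MPFeasible s t 𝒱 x ∧ ∑ v ∈ 𝒱, x v = (L.map Prod.snd).sum := by
  obtain ⟨hIs, hFeas⟩ := hL
  have hdur : ∀ seg ∈ L, 0 ≤ seg.2 := fun seg h => (hIs seg h).2
  set x : (Fin F → ℝ) → ℝ :=
    fun v => ((L.filter (fun seg => seg.1 = v)).map Prod.snd).sum with hxdef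
  have hx0 : ∀ v, 0 ≤ x v := by
    intro v
    apply List.sum_nonneg
    intro a ha
    obtain ⟨seg, hseg, rfl⟩ := List.mem_map.1 ha
    exact hdur seg (List.mem_of_mem_filter hseg)
  have htot : ∀ (S : Finset (Fin F → ℝ)), (∀ seg ∈ L, seg.1 ∈ S) →
      ∑ v ∈ S, x v = (L.map Prod.snd).sum := by
    intro S hS
    have h1 := group_sum S (fun _ => 1) L
    simp only [one_mul] at h1
    have h2 := filter_map_sum_eq (fun seg : (Fin F → ℝ) × ℝ => decide (seg.1 ∈ S)) Prod.snd L
      (fun a ha hna => absurd (hS a ha) (by simpa using hna))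
    exact h1.trans h2
  refine ⟨x, ⟨fun v _ => hx0 v, ?_, ?_⟩, htot 𝒱 hmem⟩
  · intro f
    have h1 := group_sum (𝒱.filter (fun v => 0 < v f)) (fun v => v f) L
    have h2 := filter_map_sum_eq
      (fun seg : (Fin F → ℝ) × ℝ => decide (seg.1 ∈ 𝒱.filter (fun v => 0 < v f)))
      (fun seg => seg.1 f * seg.2) L ?_
    · exact h1.trans (h2.trans (hFeas f).1)
    · intro a ha hna
      have hmem1 : a.1 ∈ 𝒱 := hmem a ha
      have : ¬ 0 < a.1 f := fun hp => hna (by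
        simp only [decide_eq_true_eq, Finset.mem_filter]
        exact ⟨hmem1, hp⟩)
      have : a.1 f = 0 := le_antisymm (not_lt.1 this) (hnn a.1 hmem1 f)
      simp [this]
  · intro f
    have h1 := group_sum (𝒱.filter (fun v => ∃ i ≤ f, 0 < v i)) (fun _ => 1) L
    simp only [one_mul] at h1
    have key := prefix_filter_sum
      (fun seg : (Fin F → ℝ) × ℝ => decide (seg.1 ∈ 𝒱.filter (fun v => ∃ i ≤ f, 0 < v i)))
      (t f) L hdur ?_
    · rcases key with h | h
      · exact le_of_eq_of_le h1 h
      · refine le_of_eq_of_le (h1.trans ?_) (ht f).le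
        show (List.map Prod.snd (List.filter _ L)).sum = 0
        rw [show (List.filter (fun seg : (Fin F → ℝ) × ℝ =>
          decide (seg.1 ∈ 𝒱.filter (fun v => ∃ i ≤ f, 0 < v i))) L) = [] from h]
        simp
    · intro k hk
      have hk' : (L.get k).1 ∈ 𝒱.filter (fun v => ∃ i ≤ f, 0 < v i) := by
        simpa using hk
      obtain ⟨-, i, hif, hpos⟩ := Finset.mem_filter.1 hk' 
      exact le_trans ((hFeas i).2 k hpos) (hmono hif)

lemma mp_to_sched {F : ℕ} (s t : Fin F → ℝ) (hmono : Monotone t)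
    (𝒱 : Finset (Fin F → ℝ))
    (hnn : ∀ v ∈ 𝒱, ∀ f, 0 ≤ v f) (hpos : ∀ v ∈ 𝒱, ∃ f, 0 < v f)
    (x : (Fin F → ℝ) → ℝ) (hx : MPFeasible s t 𝒱 x) :
    ∃ L, (FeasibleSchedule s t L ∧ ∀ seg ∈ L, seg.1 ∈ 𝒱) ∧
      (L.map Prod.snd).sum = ∑ v ∈ 𝒱, x v := by
  obtain ⟨hx0, hdel, hdl⟩ := hx
  set key : (Fin F → ℝ) → ℕ := fun v => sInf {n : ℕ | ∃ i : Fin F, (i : ℕ) ≤ n ∧ 0 < v i}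
    with hkey
  set l : List (Fin F → ℝ) := 𝒱.toList.mergeSort (fun v w => decide (key v ≤ key w)) with hl
  have hperm : l.Perm 𝒱.toList := List.mergeSort_perm _ _
  have hmeml : ∀ v ∈ l, v ∈ 𝒱 := fun v hv => Finset.mem_toList.1 (hperm.mem_iff.1 hv)
  have hnodup : l.Nodup := hperm.nodup_iff.2 𝒱.nodup_toList
  have hsort : l.Pairwise (fun v w => key v ≤ key w) := by
    have := List.pairwise_mergeSort (le := fun v w => decide (key v ≤ key w))
      (fun a b c hab hbc => by
        simp only [decide_eq_true_eq] at *; exact le_trans hab hbc)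
      (fun a b => by
        simp only [Bool.or_eq_true, decide_eq_true_eq]; exact le_total _ _)
      𝒱.toList
    exact this.imp (fun h => by simpa using h)
  have hsum : ∀ g : (Fin F → ℝ) → ℝ, (l.map g).sum = ∑ v ∈ 𝒱, g v := by
    intro g
    rw [← Finset.sum_map_toList]
    exact (hperm.map g).sum_eq
  set L : List ((Fin F → ℝ) × ℝ) := l.map (fun v => (v, x v)) with hL
  have hmemL : ∀ seg ∈ L, seg.1 ∈ 𝒱 := by
    intro seg hseg
    obtain ⟨v, hv, rfl⟩ := List.mem_map.1 hseg
    exact hmeml v hv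
  have hmk : (L.map Prod.snd).sum = ∑ v ∈ 𝒱, x v := by
    rw [hL, List.map_map]; exact hsum x
  refine ⟨L, ⟨⟨?_, ?_⟩, hmemL⟩, hmk⟩
  · -- IsSchedule
    intro seg hseg
    obtain ⟨v, hv, rfl⟩ := List.mem_map.1 hseg
    exact ⟨hnn v (hmeml v hv), hx0 v (hmeml v hv)⟩
  · intro f
    constructor
    · -- delivery
      rw [hL, List.map_map]
      have h1 : (l.map (fun v => v f * x v)).sum = ∑ v ∈ 𝒱, v f * x v := hsum _
      have h2 : ∑ v ∈ 𝒱.filter (fun v => 0 < v f), v f * x v = ∑ v ∈ 𝒱, v f * x v := by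
        refine Finset.sum_subset (Finset.filter_subset _ _) ?_
        intro v hv hnf
        have : ¬ 0 < v f := fun hp => hnf (Finset.mem_filter.2 ⟨hv, hp⟩)
        have : v f = 0 := le_antisymm (not_lt.1 this) (hnn v hv f)
        simp [this]
      rw [show ((fun seg : (Fin F → ℝ) × ℝ => seg.1 f * seg.2) ∘ (fun v => (v, x v)))
        = fun v => v f * x v from rfl] at *
      rw [h1, ← hdel f]
      exact h2.symm
    · -- deadlines
      intro k hk
      have hlen : L.length = l.length := by rw [hL, List.length_map]
      have hkl : (k : ℕ) < l.length := by rw [← hlen]; exact k.isLt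
      set k' : Fin l.length := ⟨(k : ℕ), hkl⟩ with hk'
      set v : Fin F → ℝ := l.get k' with hv
      have hgetL : (L.get k) = (v, x v) := by
        show (l.map (fun v => (v, x v))).get ⟨(k : ℕ), by simp only [List.length_map]; exact hkl⟩ = (v, x v)
        simp [List.get_eq_getElem, hv, hk']
      have hvf : 0 < v f := by rw [hgetL] at hk; exact hk
      have hv𝒱 : v ∈ 𝒱 := hmeml v (by rw [hv]; exact List.get_mem l _)
      have hkeyv : key v ≤ (f : ℕ) := Nat.sInf_le ⟨f, le_rfl, hvf⟩
      -- prefix is a map of a take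
      have htake : L.take ((k : ℕ) + 1) = (l.take ((k : ℕ) + 1)).map (fun v => (v, x v)) := by
        show (l.map (fun v => (v, x v))).take ((k : ℕ) + 1) = _
        exact (List.map_take).symm
      have hmemtake : ∀ w ∈ l.take ((k : ℕ) + 1), key w ≤ key v := by
        intro w hw
        rw [List.mem_take_iff_getElem] at hw
        obtain ⟨j, hj, rfl⟩ := hw
        have hjlt : j < l.length := lt_of_lt_of_le hj (min_le_right _ _)
        have hjk : j ≤ (k : ℕ) := Nat.lt_succ_iff.1 (lt_of_lt_of_le hj (min_le_left _ _))
        rcases lt_or_eq_of_le hjk with h | h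
        · exact List.pairwise_iff_get.1 hsort ⟨j, hjlt⟩ k' h
        · have : l[j] = v := by rw [hv]; congr 1
          rw [this]
      -- sum over prefix ≤ sum over deadline-filtered finset
      have hnd : (l.take ((k : ℕ) + 1)).Nodup := hnodup.sublist (List.take_sublist _ _)
      have hsub : (l.take ((k : ℕ) + 1)).toFinset ⊆
          𝒱.filter (fun w => ∃ i ≤ f, 0 < w i) := by
        intro w hw
        rw [List.mem_toFinset] at hw
        have hw𝒱 : w ∈ 𝒱 := hmeml w (List.take_subset _ _ hw)
        have hne : {n : ℕ | ∃ i : Fin F, (i : ℕ) ≤ n ∧ 0 < w i}.Nonempty := by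
          obtain ⟨i, hi⟩ := hpos w hw𝒱
          exact ⟨i, i, le_rfl, hi⟩
        obtain ⟨i, hik, hwi⟩ := Nat.sInf_mem hne
        refine Finset.mem_filter.2 ⟨hw𝒱, i, ?_, hwi⟩
        have : (i : ℕ) ≤ (f : ℕ) := le_trans hik (le_trans (hmemtake w hw) hkeyv)
        exact Fin.le_def.2 this
      have hsum2 : ((L.take ((k : ℕ) + 1)).map Prod.snd).sum
          = ∑ w ∈ (l.take ((k : ℕ) + 1)).toFinset, x w := by
        rw [htake, List.map_map, List.sum_toFinset x hnd]
        rfl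
      rw [hsum2]
      calc ∑ w ∈ (l.take ((k : ℕ) + 1)).toFinset, x w
          ≤ ∑ w ∈ 𝒱.filter (fun w => ∃ i ≤ f, 0 < w i), x w := by
            refine Finset.sum_le_sum_of_subset_of_nonneg hsub ?_
            intro w hw _
            exact hx0 w (Finset.mem_filter.1 hw).1
        _ ≤ t f := hdl f


/-- a feasible schedule using rate vectors from `𝒱` exists iff an
MP-feasible `x` exists; moreover, when they exist, the minimum makespan over feasible
schedules using vectors from `𝒱` equals the minimum of `∑_{v ∈ 𝒱} x v` over
MP-feasible `x`. -/
theorem mp_equiv_schedules {F : ℕ} (hF : 1 ≤ F)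
    (s t : Fin F → ℝ) (hs : ∀ f, 0 < s f) (ht : ∀ f, 0 < t f)
    (hmono : Monotone t)
    (𝒱 : Finset (Fin F → ℝ)) (h𝒱 : 𝒱.Nonempty)
    (hnn : ∀ v ∈ 𝒱, ∀ f, 0 ≤ v f) (hpos : ∀ v ∈ 𝒱, ∃ f, 0 < v f) :
    ((∃ L : List ((Fin F → ℝ) × ℝ),
        FeasibleSchedule s t L ∧ ∀ seg ∈ L, seg.1 ∈ 𝒱) ↔
      (∃ x : (Fin F → ℝ) → ℝ, MPFeasible s t 𝒱 x)) ∧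
    ((∃ L : List ((Fin F → ℝ) × ℝ),
        FeasibleSchedule s t L ∧ ∀ seg ∈ L, seg.1 ∈ 𝒱) →
      sInf {m : ℝ | ∃ L : List ((Fin F → ℝ) × ℝ),
          (FeasibleSchedule s t L ∧ ∀ seg ∈ L, seg.1 ∈ 𝒱) ∧
          (L.map Prod.snd).sum = m} =
      sInf {m : ℝ | ∃ x : (Fin F → ℝ) → ℝ,
          MPFeasible s t 𝒱 x ∧ ∑ v ∈ 𝒱, x v = m}) := by
  have hset : {m : ℝ | ∃ L : List ((Fin F → ℝ) × ℝ),
        (FeasibleSchedule s t L ∧ ∀ seg ∈ L, seg.1 ∈ 𝒱) ∧ (L.map Prod.snd).sum = m}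
      = {m : ℝ | ∃ x : (Fin F → ℝ) → ℝ, MPFeasible s t 𝒱 x ∧ ∑ v ∈ 𝒱, x v = m} := by
    ext m
    constructor
    · rintro ⟨L, ⟨hL, hmem⟩, rfl⟩
      obtain ⟨x, hx, hsum⟩ := sched_to_mp s t ht hmono 𝒱 hnn L hL hmem
      exact ⟨x, hx, hsum⟩
    · rintro ⟨x, hx, rfl⟩
      obtain ⟨L, hL, hsum⟩ := mp_to_sched s t hmono 𝒱 hnn hpos x hx
      exact ⟨L, hL, hsum⟩
  constructor
  · constructor
    · rintro ⟨L, hL, hmem⟩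
      obtain ⟨x, hx, -⟩ := sched_to_mp s t ht hmono 𝒱 hnn L hL hmem
      exact ⟨x, hx⟩
    · rintro ⟨x, hx⟩
      obtain ⟨L, hL, -⟩ := mp_to_sched s t hmono 𝒱 hnn hpos x hx
      exact ⟨L, hL.1, hL.2⟩
  · intro _
    rw [hset]
end

section
/- Let f⁺ ∈ Fin F and suppose r* minimizes g over S_{f⁺}, r* is not identically zero, and let f⁺⁺ be the least index with r* f⁺⁺ > 0 (so f⁺⁺ ≥ f⁺). Then for every m with f⁺ ≤ m ≤ f⁺⁺: r* ∈ S_m, r* minimizes g over S_m, and the minimum of g over S_m equals the minimum of g over S_{f⁺}, namely g(r*). Consequently the subproblems S_{f⁺+1}, …, S_{f⁺⁺} can be discarded without loss of optimality. -/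
open scoped Classical BigOperators

/-- if `r*` minimizes the reduced-cost objective `g` over the restricted
set `S_{f⁺}` and `f⁺⁺` is the least flow index with positive rate in `r*`, then for
every `m` with `f⁺ ≤ m ≤ f⁺⁺`, `r*` belongs to and minimizes `g` over `S_m`, and the
minimum of `g` over `S_m` equals the minimum of `g` over `S_{f⁺}`, namely `g r*`.
Hence the subproblems `S_{f⁺+1}, …, S_{f⁺⁺}` can be discarded. -/
theorem subproblem_skipping {F : ℕ} (hF : 1 ≤ F)
    (C : Set (Fin F → ℝ)) (hC : ∀ r ∈ C, ∀ i, 0 ≤ r i)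
    (lam : Fin F → ℝ)
    (S : Fin F → Set (Fin F → ℝ))
    (hS : ∀ m : Fin F, S m = {r ∈ C | ∀ i : Fin F, i < m → r i = 0})
    (g : (Fin F → ℝ) → ℝ)
    (hg : ∀ r, g r = 1 - ∑ f : Fin F, lam f * r f)
    (fp : Fin F) (rstar : Fin F → ℝ)
    (hmem : rstar ∈ S fp) (hmin : ∀ r ∈ S fp, g rstar ≤ g r)
    (hne : rstar ≠ 0)
    (fpp : Fin F)
    (hfpp : 0 < rstar fpp ∧ ∀ i : Fin F, 0 < rstar i → fpp ≤ i) :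
    fp ≤ fpp ∧
    ∀ m : Fin F, fp ≤ m → m ≤ fpp →
      rstar ∈ S m ∧ (∀ r ∈ S m, g rstar ≤ g r) ∧
      IsLeast (g '' S m) (g rstar) ∧
      IsLeast (g '' S fp) (g rstar) := by
  obtain ⟨hpos, hleast⟩ := hfpp
  have hmemC : rstar ∈ C := by rw [hS] at hmem; exact hmem.1
  have hzero : ∀ i : Fin F, i < fp → rstar i = 0 := by
    rw [hS] at hmem; exact hmem.2
  have hle : fp ≤ fpp := by
    by_contra h
    exact absurd (hzero fpp (lt_of_not_ge h)) (ne_of_gt hpos)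
  refine ⟨hle, fun m hfm hmf => ?_⟩
  have hmemm : rstar ∈ S m := by
    rw [hS]
    refine ⟨hmemC, fun i hi => ?_⟩
    rcases lt_or_eq_of_le (hC rstar hmemC i) with hp | hp
    · exact absurd (lt_of_lt_of_le hi hmf) (not_lt.mpr (hleast i hp))
    · exact hp.symm
  have hsub : S m ⊆ S fp := by
    intro r hr
    rw [hS] at hr ⊢
    exact ⟨hr.1, fun i hi => hr.2 i (lt_of_lt_of_le hi hfm)⟩
  have hminm : ∀ r ∈ S m, g rstar ≤ g r := fun r hr => hmin r (hsub hr)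
  exact ⟨hmemm, hminm, ⟨⟨rstar, hmemm, rfl⟩, fun y ⟨r, hr, hy⟩ => hy ▸ hminm r hr⟩,
    ⟨⟨rstar, hmem, rfl⟩, fun y ⟨r, hr, hy⟩ => hy ▸ hmin r hr⟩⟩
end

section
/- If Σ_{i ≤ f} s i ≤ c · t f for every flow f, then the EDF sequential schedule is a feasible continuous schedule: for every flow f, ∫₀^{t f} of flow f's rate function equals s f, and all flows are completed by time (Σ_{f} s f)/c. -/
open scoped Classical BigOperators
open MeasureTheory

/-- A continuous schedule on a single link of capacity `c`: measurable nonnegative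
rate functions whose sum never exceeds `c` at any time `τ ≥ 0`. -/
def ContSched (F : ℕ) (c : ℝ) (ρ : Fin F → ℝ → ℝ) : Prop :=
  (∀ f, Measurable (ρ f)) ∧ (∀ f τ, 0 ≤ ρ f τ) ∧
  (∀ τ : ℝ, 0 ≤ τ → ∑ f : Fin F, ρ f τ ≤ c)

/-- The EDF (earliest-deadline-first) sequential schedule: flow `f` is transmitted
alone at full rate `c` on the interval `[P (f-1), P f)`, where `P f = (∑_{i ≤ f} s i)/c`
are the prefix sums, and at rate `0` elsewhere. -/
noncomputable def edf (F : ℕ) (s : Fin F → ℝ) (c : ℝ) : Fin F → ℝ → ℝ :=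
  fun f τ =>
    if (∑ i ∈ Finset.Iio f, s i) / c ≤ τ ∧ τ < (∑ i ∈ Finset.Iic f, s i) / c
    then c else 0

/-- if `∑_{i ≤ f} s i ≤ c * t f` for every flow `f`, then the EDF
sequential schedule is a feasible continuous schedule, and all flows are completed
by time `(∑ f s f)/c`. -/
theorem edf_feasible {F : ℕ} (hF : 1 ≤ F)
    (s t : Fin F → ℝ) (hs : ∀ f, 0 < s f) (ht : ∀ f, 0 < t f)
    (hmono : Monotone t) (c : ℝ) (hc : 0 < c)
    (hfit : ∀ f : Fin F, ∑ i ∈ Finset.Iic f, s i ≤ c * t f) :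
    ContSched F c (edf F s c) ∧
    (∀ f : Fin F, (∫ τ in (0:ℝ)..(t f), edf F s c f τ) = s f) ∧
    (∀ f : Fin F, ∀ τ : ℝ, (∑ i : Fin F, s i) / c ≤ τ → edf F s c f τ = 0) := by
  have hs0 : ∀ f : Fin F, (0:ℝ) ≤ s f := fun f => (hs f).le
  set A : Fin F → ℝ := fun f => (∑ i ∈ Finset.Iio f, s i) / c with hAdef
  set B : Fin F → ℝ := fun f => (∑ i ∈ Finset.Iic f, s i) / c with hBdef
  have hedf : ∀ f, edf F s c f = (Set.Ico (A f) (B f)).indicator (fun _ => c) := by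
    intro f; funext τ
    simp [edf, Set.indicator, Set.mem_Ico, A, B]
  have hA0 : ∀ f, 0 ≤ A f := fun f =>
    div_nonneg (Finset.sum_nonneg fun i _ => hs0 i) hc.le
  have hIic : ∀ f : Fin F, ∑ i ∈ Finset.Iic f, s i = s f + ∑ i ∈ Finset.Iio f, s i := by
    intro f
    rw [← Finset.Iio_insert, Finset.sum_insert (by simp)]
  have hBmA : ∀ f, B f - A f = s f / c := by
    intro f
    simp only [hAdef, hBdef, hIic, add_div]
    ring
  have hAB : ∀ f, A f < B f := by
    intro f
    have : (0:ℝ) < s f / c := div_pos (hs f) hc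
    linarith [hBmA f]
  have hBA : ∀ f g : Fin F, f < g → B f ≤ A g := by
    intro f g hfg
    have h := Finset.sum_le_sum_of_subset_of_nonneg
        (fun i hi => Finset.mem_Iio.mpr (lt_of_le_of_lt (Finset.mem_Iic.mp hi) hfg))
        (fun i _ _ => hs0 i)
    exact (div_le_div_iff_of_pos_right hc).mpr h
  have hBt : ∀ f, B f ≤ t f := by
    intro f
    rw [hBdef]
    rw [div_le_iff₀ hc]
    calc ∑ i ∈ Finset.Iic f, s i ≤ c * t f := hfit f
      _ = t f * c := mul_comm _ _
  have hzero : ∀ f : Fin F, ∀ τ : ℝ, (∑ i : Fin F, s i) / c ≤ τ → edf F s c f τ = 0 := by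
    intro f τ hτ
    have hBtot : B f ≤ (∑ i : Fin F, s i) / c := by
      have h := Finset.sum_le_sum_of_subset_of_nonneg (Finset.subset_univ (Finset.Iic f))
          (fun i _ _ => hs0 i)
      exact (div_le_div_iff_of_pos_right hc).mpr h
    rw [hedf f]
    simp only [Set.indicator, Set.mem_Ico]
    rw [if_neg]
    rintro ⟨h1, h2⟩
    linarith
  refine ⟨⟨?_, ?_, ?_⟩, ?_, hzero⟩
  · intro f
    rw [hedf f]
    exact Measurable.indicator measurable_const measurableSet_Ico
  · intro f τ
    rw [hedf f]
    exact Set.indicator_nonneg (fun _ _ => hc.le) τ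
  · intro τ hτ
    by_cases hex : ∃ f : Fin F, A f ≤ τ ∧ τ < B f
    · obtain ⟨f0, hf01, hf02⟩ := hex
      have hsingle : ∑ f : Fin F, edf F s c f τ = edf F s c f0 τ := by
        apply Finset.sum_eq_single_of_mem f0 (Finset.mem_univ _)
        intro g _ hg
        rw [hedf g]
        simp only [Set.indicator, Set.mem_Ico]
        rw [if_neg]
        rintro ⟨h1, h2⟩
        rcases hg.lt_or_gt with h | h
        · linarith [hBA g f0 h]
        · linarith [hBA f0 g h]
      rw [hsingle, hedf f0]
      simp only [Set.indicator]
      split <;> simp [hc.le]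
    · push_neg at hex
      have : ∀ f : Fin F, edf F s c f τ = 0 := by
        intro f
        rw [hedf f]
        simp only [Set.indicator, Set.mem_Ico]
        rw [if_neg]
        rintro ⟨h1, h2⟩
        exact absurd h2 (not_lt.mpr (hex f h1))
      simp only [this, Finset.sum_const_zero]
      exact hc.le
  · intro f
    have h0t : (0:ℝ) ≤ t f := (ht f).le
    rw [hedf f, intervalIntegral.integral_of_le h0t,
      MeasureTheory.setIntegral_indicator measurableSet_Ico,
      MeasureTheory.setIntegral_const]
    have hvol : volume (Set.Ioc 0 (t f) ∩ Set.Ico (A f) (B f))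
        = ENNReal.ofReal (B f - A f) := by
      apply le_antisymm
      · calc volume (Set.Ioc 0 (t f) ∩ Set.Ico (A f) (B f))
            ≤ volume (Set.Icc (A f) (B f)) :=
              measure_mono (fun x hx => ⟨hx.2.1, hx.2.2.le⟩)
          _ = ENNReal.ofReal (B f - A f) := Real.volume_Icc
      · calc ENNReal.ofReal (B f - A f) = volume (Set.Ioo (A f) (B f)) :=
              Real.volume_Ioo.symm
          _ ≤ volume (Set.Ioc 0 (t f) ∩ Set.Ico (A f) (B f)) :=
              measure_mono (fun x hx =>
                ⟨⟨lt_of_le_of_lt (hA0 f) hx.1, hx.2.le.trans (hBt f)⟩, hx.1.le, hx.2⟩)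
    rw [measureReal_def, hvol, ENNReal.toReal_ofReal (by linarith [hAB f]), hBmA f, smul_eq_mul]
    field_simp
end

section
/- A feasible continuous schedule exists if and only if Σ_{i ≤ f} s i ≤ c · t f for every flow f. -/
set_option maxHeartbeats 1000000


open scoped Classical BigOperators
open MeasureTheory

/-- A continuous schedule is feasible if each flow's entire demand is delivered
by its deadline. -/
def FeasCont (F : ℕ) (s t : Fin F → ℝ) (c : ℝ) (ρ : Fin F → ℝ → ℝ) : Prop :=
  ContSched F c ρ ∧ ∀ f, (∫ τ in (0:ℝ)..(t f), ρ f τ) = s f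

/-- a feasible continuous schedule exists iff
`∑_{i ≤ f} s i ≤ c * t f` for every flow `f`. -/
theorem feasibility_characterization {F : ℕ} (hF : 1 ≤ F)
    (s t : Fin F → ℝ) (hs : ∀ f, 0 < s f) (ht : ∀ f, 0 < t f)
    (hmono : Monotone t) (c : ℝ) (hc : 0 < c) :
    (∃ ρ : Fin F → ℝ → ℝ, FeasCont F s t c ρ) ↔
      ∀ f : Fin F, ∑ i ∈ Finset.Iic f, s i ≤ c * t f := by
  constructor
  · rintro ⟨ρ, ⟨⟨hmeas, hpos, hcap⟩, hint⟩⟩ f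
    -- each ρ i is bounded by c on nonneg times
    have hbd : ∀ (i : Fin F) (τ : ℝ), 0 ≤ τ → ρ i τ ≤ c := by
      intro i τ hτ
      calc ρ i τ ≤ ∑ g : Fin F, ρ g τ :=
            Finset.single_le_sum (fun g _ => hpos g τ) (Finset.mem_univ i)
        _ ≤ c := hcap τ hτ
    have hii : ∀ (i : Fin F) (x : ℝ), 0 ≤ x → IntervalIntegrable (ρ i) volume 0 x := by
      intro i x hx
      rw [intervalIntegrable_iff]
      apply Measure.integrableOn_of_bounded (M := c) measure_Ioc_lt_top.ne
        (hmeas i).aestronglyMeasurable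
      filter_upwards [ae_restrict_mem measurableSet_uIoc] with τ hτ
      have hτ0 : 0 ≤ τ := by
        have h1 := hτ.1
        have : (0:ℝ) ⊓ x = 0 := min_eq_left hx
        rw [this] at h1
        exact h1.le
      rw [Real.norm_eq_abs, abs_of_nonneg (hpos i τ)]
      exact hbd i τ hτ0
    have hle : ∀ i : Fin F, i ≤ f →
        (∫ τ in (0:ℝ)..(t i), ρ i τ) ≤ ∫ τ in (0:ℝ)..(t f), ρ i τ := by
      intro i hif
      have h1 := hii i (t i) (ht i).le
      have h2 := hii i (t f) (ht f).le
      have h3 : IntervalIntegrable (ρ i) volume (t i) (t f) := h1.symm.trans h2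
      have := intervalIntegral.integral_add_adjacent_intervals h1 h3
      rw [← this]
      have : 0 ≤ ∫ τ in (t i)..(t f), ρ i τ :=
        intervalIntegral.integral_nonneg (hmono hif) (fun τ _ => hpos i τ)
      linarith
    calc ∑ i ∈ Finset.Iic f, s i
        = ∑ i ∈ Finset.Iic f, ∫ τ in (0:ℝ)..(t i), ρ i τ := by
          exact Finset.sum_congr rfl fun i _ => (hint i).symm
      _ ≤ ∑ i ∈ Finset.Iic f, ∫ τ in (0:ℝ)..(t f), ρ i τ :=
          Finset.sum_le_sum fun i hi => hle i (Finset.mem_Iic.mp hi)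
      _ = ∫ τ in (0:ℝ)..(t f), ∑ i ∈ Finset.Iic f, ρ i τ :=
          (intervalIntegral.integral_finset_sum
            (fun i _ => hii i (t f) (ht f).le)).symm
      _ ≤ ∫ τ in (0:ℝ)..(t f), c := by
          have hsum_int : IntervalIntegrable (fun τ => ∑ i ∈ Finset.Iic f, ρ i τ)
              volume 0 (t f) := by
            rw [intervalIntegrable_iff]
            apply Measure.integrableOn_of_bounded (M := c) measure_Ioc_lt_top.ne
              (Finset.measurable_sum _ (fun i _ => hmeas i)).aestronglyMeasurable
            filter_upwards [ae_restrict_mem measurableSet_uIoc] with τ hτ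
            have hτ0 : 0 ≤ τ := by
              have h1 := hτ.1
              have h2 : (0:ℝ) ⊓ t f = 0 := min_eq_left (ht f).le
              rw [h2] at h1
              exact h1.le
            rw [Real.norm_eq_abs, abs_of_nonneg (Finset.sum_nonneg fun i _ => hpos i τ)]
            calc ∑ i ∈ Finset.Iic f, ρ i τ ≤ ∑ g : Fin F, ρ g τ :=
                  Finset.sum_le_sum_of_subset_of_nonneg (Finset.subset_univ _)
                    (fun g _ _ => hpos g τ)
              _ ≤ c := hcap τ hτ0
          apply intervalIntegral.integral_mono_on (ht f).le hsum_int
            intervalIntegrable_const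
          intro τ hτ
          calc ∑ i ∈ Finset.Iic f, ρ i τ ≤ ∑ g : Fin F, ρ g τ :=
                Finset.sum_le_sum_of_subset_of_nonneg (Finset.subset_univ _)
                  (fun g _ _ => hpos g τ)
            _ ≤ c := hcap τ hτ.1
      _ = c * t f := by
          rw [intervalIntegral.integral_const, smul_eq_mul]
          ring
  · intro h
    set A : Fin F → ℝ := fun f => (∑ i ∈ Finset.Iio f, s i) / c with hA
    set B : Fin F → ℝ := fun f => (∑ i ∈ Finset.Iic f, s i) / c with hB
    have hA0 : ∀ f, 0 ≤ A f :=
      fun f => div_nonneg (Finset.sum_nonneg fun i _ => (hs i).le) hc.le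
    have hABlt : ∀ f, A f < B f := by
      intro f
      rw [hA, hB]
      apply (div_lt_div_iff_of_pos_right hc).mpr
      rw [← Finset.Iio_insert, Finset.sum_insert (by simp)]
      linarith [hs f]
    have hBA : ∀ g f : Fin F, g < f → B g ≤ A f := by
      intro g f hgf
      have hsub : Finset.Iic g ⊆ Finset.Iio f := fun i hi =>
        Finset.mem_Iio.mpr (lt_of_le_of_lt (Finset.mem_Iic.mp hi) hgf)
      have : ∑ i ∈ Finset.Iic g, s i ≤ ∑ i ∈ Finset.Iio f, s i :=
        Finset.sum_le_sum_of_subset_of_nonneg hsub (fun i _ _ => (hs i).le)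
      rw [hA, hB]
      exact (div_le_div_iff_of_pos_right hc).mpr this
    have hBt : ∀ f, B f ≤ t f := by
      intro f
      rw [div_le_iff₀' hc]
      exact h f
    refine ⟨fun f τ => Set.indicator (Set.Ioc (A f) (B f)) (fun _ => c) τ, ⟨⟨?_, ?_, ?_⟩, ?_⟩⟩
    · intro f
      exact (measurable_const.indicator measurableSet_Ioc)
    · intro f τ
      exact Set.indicator_nonneg (fun _ _ => hc.le) τ
    · intro τ hτ
      dsimp only
      by_cases hex : ∃ f : Fin F, τ ∈ Set.Ioc (A f) (B f)
      · obtain ⟨f, hf⟩ := hex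
        rw [Finset.sum_eq_single f]
        · rw [Set.indicator_of_mem hf]
        · intro g _ hgf
          apply Set.indicator_of_notMem
          rcases lt_or_gt_of_ne hgf with hlt | hgt
          · -- g < f : τ > A f ≥ B g
            intro hmem
            exact absurd hmem.2 (not_le.mpr (lt_of_le_of_lt (hBA g f hlt) hf.1))
          · -- g > f : τ ≤ B f ≤ A g
            intro hmem
            exact absurd hmem.1 (not_lt.mpr (le_trans hf.2 (hBA f g hgt)))
        · intro hf; exact absurd (Finset.mem_univ f) hf
      · push_neg at hex
        calc ∑ f : Fin F, Set.indicator (Set.Ioc (A f) (B f)) (fun _ => c) τ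
            = 0 := Finset.sum_eq_zero fun f _ => Set.indicator_of_notMem (hex f) _
          _ ≤ c := hc.le
    · intro f
      have hsupp : Function.support
          (fun τ => Set.indicator (Set.Ioc (A f) (B f)) (fun _ => c) τ) ⊆
          Set.Ioc 0 (t f) := by
        intro τ hτ
        rw [Function.mem_support] at hτ
        have : τ ∈ Set.Ioc (A f) (B f) := by
          by_contra hn
          exact hτ (Set.indicator_of_notMem hn _)
        exact ⟨lt_of_le_of_lt (hA0 f) this.1, le_trans this.2 (hBt f)⟩
      rw [intervalIntegral.integral_eq_integral_of_support_subset hsupp]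
      rw [MeasureTheory.integral_indicator_const _ measurableSet_Ioc]
      rw [Real.volume_real_Ioc_of_le (by linarith [hABlt f])]
      have : B f - A f = s f / c := by
        rw [hB, hA]
        rw [div_sub_div_same, ← Finset.Iio_insert, Finset.sum_insert (by simp)]
        ring
      rw [this, smul_eq_mul, div_mul_cancel₀ _ hc.ne']
end

section
/- Suppose a time-varying routing on [0,T] satisfies ∫₀^T r f (τ) dτ = s f for every flow f and additionally r f τ = 0 for almost every τ > t f, where t f ∈ (0,T] is the deadline of flow f. Let 0 = τ₀ < τ₁ < ⋯ < τ_K = T be slice boundaries such that every deadline t f equals some τ_k. For each slice k and each flow f and arc a, define ȳᵏ f a and r̄ᵏ f as the averages of y f a and r f over [τ_{k−1}, τ_k]. Then within every slice k the averaged rates satisfy the conservation equations (with end-to-end rate r̄ᵏ f) and the capacity constraints Σ_f ȳᵏ f a ≤ c a; moreover Σ_{k=1}^K (τ_k − τ_{k−1}) · r̄ᵏ f = s f for every flow f, and r̄ᵏ f = 0 for every slice k with τ_{k−1} ≥ t f. Hence the averaged solution is feasible for the continuous-capacity time-sliced formulation for any such time slicing. -/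
open scoped Classical BigOperators
open MeasureTheory

/-- averaging a time-varying routing (respecting deadlines) over any
time slicing whose boundaries include all deadlines yields a feasible solution of
the continuous-capacity time-sliced formulation: within every slice the averaged
rates satisfy conservation and capacity, the sliced amounts sum to the demands, and
the averaged end-to-end rate vanishes on slices starting after the deadline. -/
theorem averaged_routing_time_sliced_feasible
    {V : Type*} [Fintype V] [DecidableEq V]
    (A : Finset (V × V)) (c : V × V → ℝ) (hc : ∀ a ∈ A, 0 ≤ c a)
    {F : ℕ} (hF : 1 ≤ F)
    (o d : Fin F → V) (hod : ∀ f, o f ≠ d f)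
    (s : Fin F → ℝ) (hs : ∀ f, 0 < s f)
    (T : ℝ) (hT : 0 < T)
    -- deadlines
    (t : Fin F → ℝ) (htpos : ∀ f, 0 < t f) (htT : ∀ f, t f ≤ T)
    -- a time-varying routing on [0, T]
    (y : Fin F → V × V → ℝ → ℝ) (r : Fin F → ℝ → ℝ)
    (hyint : ∀ f : Fin F, ∀ a ∈ A, IntervalIntegrable (y f a) volume 0 T)
    (hrint : ∀ f : Fin F, IntervalIntegrable (r f) volume 0 T)
    (hynn : ∀ f a τ, 0 ≤ y f a τ) (hrnn : ∀ f τ, 0 ≤ r f τ)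
    (hae : ∀ᵐ τ ∂volume, τ ∈ Set.Icc (0:ℝ) T →
      ((∀ f : Fin F, ∀ i : V,
          (∑ a ∈ A.filter (fun a => a.1 = i), y f a τ) -
          (∑ a ∈ A.filter (fun a => a.2 = i), y f a τ) =
            if i = o f then -(r f τ) else if i = d f then r f τ else 0) ∧
       (∀ a ∈ A, ∑ f : Fin F, y f a τ ≤ c a)))
    -- all demands are delivered, and nothing is sent after the deadline
    (hdem : ∀ f : Fin F, (∫ τ in (0:ℝ)..T, r f τ) = s f)
    (hdl : ∀ f : Fin F, ∀ᵐ τ ∂volume, τ ∈ Set.Ioc (t f) T → r f τ = 0)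
    -- slice boundaries 0 = τb 0 < τb 1 < ⋯ < τb K = T containing all deadlines
    (K : ℕ) (hK : 1 ≤ K) (τb : ℕ → ℝ)
    (hτ0 : τb 0 = 0) (hτK : τb K = T)
    (hτmono : ∀ k l : ℕ, k < l → l ≤ K → τb k < τb l)
    (hdeadslice : ∀ f : Fin F, ∃ k ≤ K, t f = τb k) :
    -- conservation within every slice, with the averaged end-to-end rate
    (∀ k ∈ Finset.Icc 1 K, ∀ f : Fin F, ∀ i : V,
      (∑ a ∈ A.filter (fun a => a.1 = i),
          (1 / (τb k - τb (k - 1))) * ∫ τ in (τb (k - 1))..(τb k), y f a τ) -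
      (∑ a ∈ A.filter (fun a => a.2 = i),
          (1 / (τb k - τb (k - 1))) * ∫ τ in (τb (k - 1))..(τb k), y f a τ) =
        if i = o f then
          -((1 / (τb k - τb (k - 1))) * ∫ τ in (τb (k - 1))..(τb k), r f τ)
        else if i = d f then
          (1 / (τb k - τb (k - 1))) * ∫ τ in (τb (k - 1))..(τb k), r f τ
        else 0) ∧
    -- capacity within every slice
    (∀ k ∈ Finset.Icc 1 K, ∀ a ∈ A,
      ∑ f : Fin F,
        ((1 / (τb k - τb (k - 1))) * ∫ τ in (τb (k - 1))..(τb k), y f a τ) ≤ c a) ∧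
    -- the sliced amounts sum to the demands
    (∀ f : Fin F,
      ∑ k ∈ Finset.Icc 1 K,
        (τb k - τb (k - 1)) *
          ((1 / (τb k - τb (k - 1))) * ∫ τ in (τb (k - 1))..(τb k), r f τ) = s f) ∧
    -- no end-to-end rate in slices starting at or after the deadline
    (∀ f : Fin F, ∀ k ∈ Finset.Icc 1 K, t f ≤ τb (k - 1) →
      (1 / (τb k - τb (k - 1))) * ∫ τ in (τb (k - 1))..(τb k), r f τ = 0) := by
  -- basic order facts about slice boundaries
  have hmle : ∀ k l : ℕ, k ≤ l → l ≤ K → τb k ≤ τb l := by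
    intro k l hkl hlK
    rcases eq_or_lt_of_le hkl with h | h
    · simp [h]
    · exact (hτmono k l h hlK).le
  have hbdd : ∀ k, k ≤ K → 0 ≤ τb k ∧ τb k ≤ T := by
    intro k hk
    exact ⟨hτ0 ▸ hmle 0 k (Nat.zero_le _) hk, hτK ▸ hmle k K hk le_rfl⟩
  have hslice : ∀ k ∈ Finset.Icc 1 K,
      0 ≤ τb (k - 1) ∧ τb (k - 1) < τb k ∧ τb k ≤ T := by
    intro k hk
    rw [Finset.mem_Icc] at hk
    refine ⟨(hbdd _ (le_trans (Nat.sub_le _ _) hk.2)).1, ?_, (hbdd _ hk.2).2⟩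
    exact hτmono _ _ (Nat.sub_lt (lt_of_lt_of_le Nat.one_pos hk.1) Nat.one_pos) hk.2
  have hsub : ∀ k ∈ Finset.Icc 1 K,
      Set.uIcc (τb (k - 1)) (τb k) ⊆ Set.uIcc (0:ℝ) T := by
    intro k hk
    obtain ⟨h0, hlt, hT'⟩ := hslice k hk
    rw [Set.uIcc_of_le hlt.le, Set.uIcc_of_le hT.le]
    exact Set.Icc_subset_Icc h0 hT'
  have hyint' : ∀ k ∈ Finset.Icc 1 K, ∀ f : Fin F, ∀ a ∈ A,
      IntervalIntegrable (y f a) volume (τb (k - 1)) (τb k) := by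
    intro k hk f a ha
    exact (hyint f a ha).mono_set (hsub k hk)
  have hrint' : ∀ k ∈ Finset.Icc 1 K, ∀ f : Fin F,
      IntervalIntegrable (r f) volume (τb (k - 1)) (τb k) := by
    intro k hk f
    exact (hrint f).mono_set (hsub k hk)
  -- a.e. version on each slice
  have haes : ∀ k ∈ Finset.Icc 1 K, ∀ᵐ τ ∂volume,
      τ ∈ Set.uIoc (τb (k - 1)) (τb k) →
      ((∀ f : Fin F, ∀ i : V,
          (∑ a ∈ A.filter (fun a => a.1 = i), y f a τ) -
          (∑ a ∈ A.filter (fun a => a.2 = i), y f a τ) =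
            if i = o f then -(r f τ) else if i = d f then r f τ else 0) ∧
       (∀ a ∈ A, ∑ f : Fin F, y f a τ ≤ c a)) := by
    intro k hk
    obtain ⟨h0, hlt, hT'⟩ := hslice k hk
    filter_upwards [hae] with τ hτ hmem
    rw [Set.uIoc_of_le hlt.le] at hmem
    exact hτ ⟨le_trans h0 hmem.1.le, le_trans hmem.2 hT'⟩
  constructor
  · -- conservation
    intro k hk f i
    obtain ⟨h0, hlt, hT'⟩ := hslice k hk
    have hΔ : (0:ℝ) < τb k - τb (k - 1) := sub_pos.2 hlt
    set a0 := τb (k - 1)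
    set b0 := τb k
    have key : (∫ τ in a0..b0,
        ((∑ a ∈ A.filter (fun a => a.1 = i), y f a τ) -
         (∑ a ∈ A.filter (fun a => a.2 = i), y f a τ))) =
        ∫ τ in a0..b0,
          (if i = o f then -(r f τ) else if i = d f then r f τ else 0) := by
      apply intervalIntegral.integral_congr_ae
      filter_upwards [haes k hk] with τ hτ hmem
      exact (hτ hmem).1 f i
    have hintout : ∀ a ∈ A.filter (fun a => a.1 = i),
        IntervalIntegrable (y f a) volume a0 b0 := by
      intro a ha; exact hyint' k hk f a (Finset.mem_filter.1 ha).1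
    have hintin : ∀ a ∈ A.filter (fun a => a.2 = i),
        IntervalIntegrable (y f a) volume a0 b0 := by
      intro a ha; exact hyint' k hk f a (Finset.mem_filter.1 ha).1
    have hsumout : (∑ a ∈ A.filter (fun a => a.1 = i), ∫ τ in a0..b0, y f a τ) =
        ∫ τ in a0..b0, ∑ a ∈ A.filter (fun a => a.1 = i), y f a τ :=
      (intervalIntegral.integral_finset_sum hintout).symm
    have hsumin : (∑ a ∈ A.filter (fun a => a.2 = i), ∫ τ in a0..b0, y f a τ) =
        ∫ τ in a0..b0, ∑ a ∈ A.filter (fun a => a.2 = i), y f a τ :=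
      (intervalIntegral.integral_finset_sum hintin).symm
    have hsub' : (∫ τ in a0..b0, ∑ a ∈ A.filter (fun a => a.1 = i), y f a τ) -
        (∫ τ in a0..b0, ∑ a ∈ A.filter (fun a => a.2 = i), y f a τ) =
        ∫ τ in a0..b0,
          ((∑ a ∈ A.filter (fun a => a.1 = i), y f a τ) -
           (∑ a ∈ A.filter (fun a => a.2 = i), y f a τ)) :=
      by
        have e1 : (fun τ => ∑ a ∈ A.filter (fun a => a.1 = i), y f a τ) =
            ∑ a ∈ A.filter (fun a => a.1 = i), y f a := by
          ext τ; simp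
        have e2 : (fun τ => ∑ a ∈ A.filter (fun a => a.2 = i), y f a τ) =
            ∑ a ∈ A.filter (fun a => a.2 = i), y f a := by
          ext τ; simp
        have h1 : IntervalIntegrable
            (fun τ => ∑ a ∈ A.filter (fun a => a.1 = i), y f a τ) volume a0 b0 := by
          rw [e1]; exact IntervalIntegrable.sum _ hintout
        have h2 : IntervalIntegrable
            (fun τ => ∑ a ∈ A.filter (fun a => a.2 = i), y f a τ) volume a0 b0 := by
          rw [e2]; exact IntervalIntegrable.sum _ hintin
        exact (intervalIntegral.integral_sub h1 h2).symm
    rw [← Finset.mul_sum, ← Finset.mul_sum, hsumout, hsumin, ← mul_sub, hsub', key]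
    split_ifs with h1 h2
    · rw [intervalIntegral.integral_neg, mul_neg]
    · rfl
    · simp
  refine ⟨?_, ?_, ?_⟩
  · -- capacity
    intro k hk a ha
    obtain ⟨h0, hlt, hT'⟩ := hslice k hk
    have hΔ : (0:ℝ) < τb k - τb (k - 1) := sub_pos.2 hlt
    set a0 := τb (k - 1)
    set b0 := τb k
    have hintf : ∀ f ∈ (Finset.univ : Finset (Fin F)),
        IntervalIntegrable (y f a) volume a0 b0 := fun f _ => hyint' k hk f a ha
    have hsum : (∑ f : Fin F, ∫ τ in a0..b0, y f a τ) =
        ∫ τ in a0..b0, ∑ f : Fin F, y f a τ :=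
      (intervalIntegral.integral_finset_sum hintf).symm
    have hmono : (∫ τ in a0..b0, ∑ f : Fin F, y f a τ) ≤
        ∫ τ in a0..b0, c a := by
      have h1 : IntervalIntegrable (fun τ => ∑ f : Fin F, y f a τ) volume a0 b0 := by
        have e : (fun τ => ∑ f : Fin F, y f a τ) = ∑ f : Fin F, y f a := by
          ext τ; simp
        rw [e]; exact IntervalIntegrable.sum _ hintf
      apply intervalIntegral.integral_mono_ae_restrict hlt.le h1 intervalIntegrable_const
      rw [Filter.EventuallyLE, ae_restrict_iff' measurableSet_Icc]
      filter_upwards [hae] with τ hτ hmem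
      exact (hτ ⟨le_trans h0 hmem.1, le_trans hmem.2 hT'⟩).2 a ha
    have hconst : (∫ τ in a0..b0, c a) = (b0 - a0) * c a := by
      simp [smul_eq_mul]
    calc ∑ f : Fin F, (1 / (b0 - a0)) * ∫ τ in a0..b0, y f a τ
        = (1 / (b0 - a0)) * ∑ f : Fin F, ∫ τ in a0..b0, y f a τ := by
          rw [Finset.mul_sum]
      _ ≤ (1 / (b0 - a0)) * ((b0 - a0) * c a) := by
          rw [hsum]
          exact mul_le_mul_of_nonneg_left (hconst ▸ hmono) (by positivity)
      _ = c a := by field_simp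
  · -- demands
    intro f
    have hterm : ∀ k ∈ Finset.Icc 1 K,
        (τb k - τb (k - 1)) *
          ((1 / (τb k - τb (k - 1))) * ∫ τ in (τb (k - 1))..(τb k), r f τ) =
        ∫ τ in (τb (k - 1))..(τb k), r f τ := by
      intro k hk
      have hΔ : (0:ℝ) < τb k - τb (k - 1) := sub_pos.2 (hslice k hk).2.1
      field_simp
    rw [Finset.sum_congr rfl hterm]
    have hadj : (∑ k ∈ Finset.range K, ∫ τ in (τb k)..(τb (k + 1)), r f τ) =
        ∫ τ in (τb 0)..(τb K), r f τ := by
      apply intervalIntegral.sum_integral_adjacent_intervals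
      intro k hk
      have hmem : k + 1 ∈ Finset.Icc 1 K := Finset.mem_Icc.2 ⟨Nat.le_add_left 1 k, hk⟩
      simpa using hrint' (k + 1) hmem f
    have hre : (∑ k ∈ Finset.Icc 1 K, ∫ τ in (τb (k - 1))..(τb k), r f τ) =
        ∑ k ∈ Finset.range K, ∫ τ in (τb k)..(τb (k + 1)), r f τ := by
      rw [← Finset.Ico_add_one_right_eq_Icc, Finset.sum_Ico_eq_sum_range]
      simp [Nat.add_sub_cancel, add_comm]
    rw [hre, hadj, hτ0, hτK, hdem f]
  · -- deadline slices
    intro f k hk htk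
    obtain ⟨h0, hlt, hT'⟩ := hslice k hk
    have hzero : (∫ τ in (τb (k - 1))..(τb k), r f τ) =
        ∫ τ in (τb (k - 1))..(τb k), (0:ℝ) := by
      apply intervalIntegral.integral_congr_ae
      filter_upwards [hdl f] with τ hτ hmem
      rw [Set.uIoc_of_le hlt.le] at hmem
      exact hτ ⟨lt_of_le_of_lt htk hmem.1, le_trans hmem.2 hT'⟩
    rw [hzero]
    simp
end

section
/- Let (v₁, x₁), …, (vₙ, xₙ) be a feasible schedule and let p < q be segment indices such that there exists a flow f′ with v_q f′ > 0 and v_p i = 0 for every flow i ≤ f′. Then the schedule obtained by deleting segment p and reinserting it (with the same rate vector v_p and duration x_p) immediately after segment q is again feasible. -/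
open scoped Classical BigOperators

/-- if segment `q` has positive rate for some flow `f′` and segment
`p < q` has zero rate for every flow `i ≤ f′`, then deleting segment `p` and
reinserting it immediately after segment `q` preserves feasibility. -/
theorem move_segment_later_feasible {F : ℕ} (hF : 1 ≤ F)
    (s t : Fin F → ℝ) (hs : ∀ f, 0 < s f) (ht : ∀ f, 0 < t f)
    (hmono : Monotone t)
    (L : List ((Fin F → ℝ) × ℝ)) (hL : FeasibleSchedule s t L)
    (p q : Fin L.length) (hpq : (p : ℕ) < (q : ℕ))
    (hswap : ∃ f' : Fin F, 0 < (L.get q).1 f' ∧ ∀ i ≤ f', (L.get p).1 i = 0) :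
    FeasibleSchedule s t
      (L.take (p : ℕ) ++ (L.drop ((p : ℕ) + 1)).take ((q : ℕ) - (p : ℕ)) ++
        [L.get p] ++ L.drop ((q : ℕ) + 1)) := by
  classical
  obtain ⟨hSched, hFeas⟩ := hL
  obtain ⟨f', hf'pos, hf'zero⟩ := hswap
  have hpn : (p : ℕ) < L.length := p.isLt
  have hqn : (q : ℕ) < L.length := q.isLt
  set a := (p : ℕ) with ha
  set c := L.get p with hc
  set A := L.take a with hA
  set B := (L.drop (a + 1)).take ((q : ℕ) - a) with hB
  set D := L.drop ((q : ℕ) + 1) with hD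
  have hAlen : A.length = a := by rw [hA, List.length_take]; omega
  have hBlen : B.length = (q : ℕ) - a := by
    rw [hB, List.length_take, List.length_drop]; omega
  have hcL : c = L[a] := by rw [hc, List.get_eq_getElem]
  have hdropa : L.drop a = c :: L.drop (a + 1) := by
    rw [hcL]; exact (List.getElem_cons_drop hpn).symm
  have hdropB : L.drop (a + 1) = B ++ D := by
    have h1 : (L.drop (a + 1)).drop ((q : ℕ) - a) = D := by
      rw [List.drop_drop, hD]
      congr 1
      omega
    conv_lhs => rw [← List.take_append_drop ((q : ℕ) - a) (L.drop (a + 1))]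
    rw [h1, ← hB]
  have hdecomp : L = A ++ (c :: (B ++ D)) := by
    conv_lhs => rw [← List.take_append_drop a L, hdropa, hdropB]
  have hperm : (A ++ B ++ [c] ++ D).Perm L := by
    rw [hdecomp]
    have h1 : (B ++ [c]).Perm ([c] ++ B) := List.perm_append_comm
    have h3 := (h1.append_right D).append_left A
    simpa [List.append_assoc] using h3
  have hc2 : 0 ≤ c.2 := by
    have : c ∈ L := by rw [hdecomp]; simp
    exact (hSched c this).2
  refine ⟨?_, ?_⟩
  · intro seg hseg
    exact hSched seg (hperm.subset hseg)
  · intro f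
    refine ⟨?_, ?_⟩
    · rw [(hperm.map _).sum_eq]; exact (hFeas f).1
    · intro k hk
      set m := (k : ℕ) with hm
      have hmlt : m < L.length := by
        have h1 := k.isLt
        have h2 := hperm.length_eq
        omega
      rw [List.get_eq_getElem] at hk
      -- four cases on the position m
      rcases lt_or_ge m a with hma | hma
      · -- case 1 : m < a, segment unchanged
        have hget : (A ++ B ++ [c] ++ D)[m]'k.isLt = L[m] := by
          rw [List.getElem_append_left (by simp [hAlen, hBlen]; omega :
                m < (A ++ B ++ [c]).length),
              List.getElem_append_left (by simp [hAlen]; omega :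
                m < (A ++ B).length),
              List.getElem_append_left (by omega : m < A.length),
              List.getElem_of_eq hdecomp,
              List.getElem_append_left (by omega : m < A.length)]
        rw [hget] at hk
        have hfeas := (hFeas f).2 ⟨m, hmlt⟩ (by rwa [List.get_eq_getElem])
        have htake : (A ++ B ++ [c] ++ D).take (m + 1) = L.take (m + 1) := by
          rw [List.take_append_of_le_length (by simp [hAlen, hBlen]; omega),
              List.take_append_of_le_length (by simp [hAlen]; omega),
              List.take_append_of_le_length (by omega)]
          conv_rhs => rw [hdecomp]
          rw [List.take_append_of_le_length (by omega)]
        rw [htake]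
        exact hfeas
      · rcases lt_or_ge m (q : ℕ) with hmq | hmq
        · -- case 2 : a ≤ m < q, segment is L[m+1]
          have hmb : m - a < B.length := by omega
          have hget : (A ++ B ++ [c] ++ D)[m]'k.isLt = B[m - a] := by
            rw [List.getElem_append_left (by simp [hAlen, hBlen]; omega :
                  m < (A ++ B ++ [c]).length),
                List.getElem_append_left (by simp [hAlen, hBlen]; omega :
                  m < (A ++ B).length),
                List.getElem_append_right (by omega : A.length ≤ m)]
            congr 1; omega
          have hgetL : L[m + 1]'(by omega) = B[m - a] := by
            rw [List.getElem_of_eq hdecomp,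
                List.getElem_append_right (by omega : A.length ≤ m + 1)]
            have : m + 1 - A.length = (m - a) + 1 := by omega
            simp_rw [this]
            rw [List.getElem_cons_succ,
                List.getElem_append_left (by omega : m - a < B.length)]
          rw [hget] at hk
          have hfeas := (hFeas f).2 ⟨m + 1, by omega⟩
            (by rw [List.get_eq_getElem]; rw [hgetL]; exact hk)
          have htakeM : (A ++ B ++ [c] ++ D).take (m + 1)
              = A ++ B.take (m + 1 - a) := by
            rw [List.take_append_of_le_length (by simp [hAlen, hBlen]; omega),
                List.take_append_of_le_length (by simp [hAlen, hBlen]; omega),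
                List.take_append, List.take_of_length_le (by omega)]
            congr 2; omega
          have htakeL : L.take (m + 2) = A ++ (c :: B.take (m + 1 - a)) := by
            conv_lhs => rw [hdecomp]
            rw [List.take_append, List.take_of_length_le (by omega)]
            congr 1
            have h2 : m + 2 - A.length = (m + 1 - a) + 1 := by omega
            rw [h2, List.take_succ_cons]
            congr 1
            rw [List.take_append_of_le_length (by omega)]
          rw [htakeM]
          rw [htakeL] at hfeas
          simp only [List.map_append, List.sum_append, List.map_cons,
            List.sum_cons] at hfeas ⊢
          linarith
        · rcases eq_or_lt_of_le hmq with hmq' | hmq'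
          · -- case 3 : m = q, the moved segment
            have hABlen : (A ++ B).length = (q : ℕ) := by simp [hAlen, hBlen]; omega
            have hget : (A ++ B ++ [c] ++ D)[m]'k.isLt = c := by
              rw [List.getElem_of_eq (show A ++ B ++ [c] ++ D = (A ++ B) ++ ([c] ++ D) by
                    simp [List.append_assoc]),
                  List.getElem_append_right (by omega : (A ++ B).length ≤ m)]
              have : m - (A ++ B).length = 0 := by omega
              simp_rw [this]
              rfl
            rw [hget] at hk
            -- f' < f, hence t f' ≤ t f
            have hlef : f' ≤ f := by
              by_contra hcon
              push_neg at hcon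
              have := hf'zero f hcon.le
              rw [hc, List.get_eq_getElem] at this
              rw [← hcL] at this
              exact absurd hk (by rw [this]; exact lt_irrefl 0)
            have hfeas := (hFeas f').2 q hf'pos
            have htakeM : (A ++ B ++ [c] ++ D).take (m + 1)
                = A ++ B ++ [c] := by
              rw [List.take_append,
                  List.take_of_length_le (by simp [hAlen, hBlen]; omega)]
              have : m + 1 - (A ++ B ++ [c]).length = 0 := by
                simp [hAlen, hBlen]; omega
              rw [this, List.take_zero, List.append_nil]
            have htakeL : L.take (m + 1) = A ++ (c :: B) := by
              conv_lhs => rw [hdecomp]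
              rw [List.take_append, List.take_of_length_le (by omega)]
              congr 1
              have h2 : m + 1 - A.length = (m - a) + 1 := by omega
              rw [h2, List.take_succ_cons]
              congr 1
              rw [List.take_append_of_le_length (by omega),
                show m - a = B.length by omega, List.take_length]
            rw [hmq'] at hfeas
            rw [htakeM]
            rw [htakeL] at hfeas
            have : t f' ≤ t f := hmono hlef
            simp only [List.map_append, List.sum_append, List.map_cons,
              List.sum_cons, List.map_nil, List.sum_nil] at hfeas ⊢
            linarith
          · -- case 4 : q < m
            have hABClen : (A ++ B ++ [c]).length = (q : ℕ) + 1 := by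
              simp [hAlen, hBlen]; omega
            have hget : (A ++ B ++ [c] ++ D)[m]'k.isLt = L[m] := by
              rw [List.getElem_append_right (by omega : (A ++ B ++ [c]).length ≤ m),
                  List.getElem_of_eq
                    (hdecomp.trans (show A ++ (c :: (B ++ D)) = (A ++ (c :: B)) ++ D by simp)),
                  List.getElem_append_right (by simp [hAlen, hBlen]; omega :
                    (A ++ (c :: B)).length ≤ m)]
              congr 1
              simp only [List.length_append, List.length_cons, List.length_nil,
                hAlen, hBlen]
              omega
            rw [hget] at hk
            have hfeas := (hFeas f).2 ⟨m, hmlt⟩ (by rwa [List.get_eq_getElem])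
            have htakeM : (A ++ B ++ [c] ++ D).take (m + 1)
                = A ++ B ++ [c] ++ D.take (m - (q : ℕ)) := by
              rw [List.take_append,
                  List.take_of_length_le (by omega)]
              congr 2
              omega
            have htakeL : L.take (m + 1) = (A ++ (c :: B)) ++ D.take (m - (q : ℕ)) := by
              conv_lhs => rw [hdecomp,
                show A ++ (c :: (B ++ D)) = (A ++ (c :: B)) ++ D by simp]
              rw [List.take_append,
                  List.take_of_length_le (by simp [hAlen, hBlen]; omega)]
              congr 2
              simp [hAlen, hBlen]; omega
            rw [htakeM]
            rw [htakeL] at hfeas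
            simp only [List.map_append, List.sum_append, List.map_cons,
              List.sum_cons, List.map_nil, List.sum_nil] at hfeas ⊢
            linarith
end
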